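/- For non-negative integers n and p, the polynomials B satisfy B_{n+p,n}(q) = Σ_{k=0}^{⌊p/2⌋} B_{n+k,n}(q) Σ_{j=k}^{p-k} q^{k(n+k)+j(n+j)} [2n+p choose 2n+2k]_q [p-2k choose j-k]_q. -/

import Mathlib

open Polynomial

/-- The `q`-factorial `[n]! = ∏_{i=1}^n (1 + q + ⋯ + q^{i-1})` in `ℚ(q)`. -/
noncomputable def qFac (n : ℕ) : RatFunc ℚ :=
  ∏ i ∈ Finset.range n, ∑ j ∈ Finset.range (i + 1), RatFunc.X ^ j

/-- The Gaussian binomial coefficient `[n choose m]_q`, zero when out of range. -/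
noncomputable def qBinom (n m : ℕ) : RatFunc ℚ :=
  if m ≤ n then qFac n / (qFac (n - m) * qFac m) else 0

/-- The polynomial `B_{n,m}(q) = [2n]![m]!/([n]![2m]![n-m]!)`. -/
noncomputable def qB (n m : ℕ) : RatFunc ℚ :=
  qFac (2 * n) * qFac m / (qFac n * qFac (2 * m) * qFac (n - m))

noncomputable def qNat (m : ℕ) : RatFunc ℚ := ∑ j ∈ Finset.range m, RatFunc.X ^ j

lemma qNat_ne_zero {m : ℕ} (h : 0 < m) : qNat m ≠ 0 := by
  have : qNat m = algebraMap (Polynomial ℚ) (RatFunc ℚ) (∑ j ∈ Finset.range m, Polynomial.X ^ j) := by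
    simp [qNat, map_sum, map_pow, RatFunc.algebraMap_X]
  rw [this]
  apply RatFunc.algebraMap_ne_zero
  intro hc
  have := congrArg (fun q => Polynomial.coeff q 0) hc
  simp [Polynomial.coeff_X_pow, Finset.sum_ite_eq, h] at this

lemma qNat_add (a b : ℕ) : qNat (a + b) = qNat a + RatFunc.X ^ a * qNat b := by
  rw [qNat, Finset.sum_range_add, qNat, qNat, Finset.mul_sum]
  simp [pow_add]

lemma qFac_succ (n : ℕ) : qFac (n + 1) = qFac n * qNat (n + 1) := by
  rw [qFac, Finset.prod_range_succ]; rfl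

lemma qFac_zero : qFac 0 = 1 := by simp [qFac]

lemma qFac_ne_zero (n : ℕ) : qFac n ≠ 0 := by
  induction n with
  | zero => simp [qFac_zero]
  | succ n ih => rw [qFac_succ]; exact mul_ne_zero ih (qNat_ne_zero (by omega))

lemma qBinom_of_le {n m : ℕ} (h : m ≤ n) : qBinom n m = qFac n / (qFac (n - m) * qFac m) := if_pos h

lemma qBinom_eq_zero {n m : ℕ} (h : n < m) : qBinom n m = 0 := if_neg (by omega)

lemma qBinom_zero (n : ℕ) : qBinom n 0 = 1 := by
  rw [qBinom_of_le (by omega)]; simp [qFac_zero, div_self (mul_ne_zero (qFac_ne_zero _) (qFac_ne_zero _)), qFac_ne_zero]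

lemma qBinom_self (n : ℕ) : qBinom n n = 1 := by
  rw [qBinom_of_le le_rfl]; simp [qFac_zero, div_self (qFac_ne_zero n)]

lemma qBinom_pascal (a j : ℕ) :
    qBinom (a + 1) (j + 1) = qBinom a (j + 1) + RatFunc.X ^ (a - j) * qBinom a j := by
  rcases lt_or_ge a j with h | h
  · rw [qBinom_eq_zero (by omega), qBinom_eq_zero (by omega), qBinom_eq_zero h]
    ring
  rcases eq_or_lt_of_le h with rfl | hja
  · rw [qBinom_self, qBinom_eq_zero (by omega), qBinom_self]
    simp
  · obtain ⟨d, rfl⟩ : ∃ d, a = j + d + 1 := ⟨a - j - 1, by omega⟩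
    rw [qBinom_of_le (by omega), qBinom_of_le (by omega), qBinom_of_le (by omega)]
    have e1 : j + d + 1 + 1 - (j + 1) = d + 1 := by omega
    have e2 : j + d + 1 - (j + 1) = d := by omega
    have e3 : j + d + 1 - j = d + 1 := by omega
    rw [e1, e2, e3]
    rw [show j + d + 1 + 1 = (j + d + 1) + 1 from rfl, qFac_succ (j + d + 1),
      show (d : ℕ) + 1 = d + 1 from rfl, qFac_succ d, qFac_succ j]
    have key : qNat (j + d + 1 + 1) = qNat (d + 1) + RatFunc.X ^ (d + 1) * qNat (j + 1) := by
      have := qNat_add (d + 1) (j + 1)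
      rw [show d + 1 + (j + 1) = j + d + 1 + 1 by omega] at this
      exact this
    rw [key]
    have h1 : qNat (d + 1) ≠ 0 := qNat_ne_zero (by omega)
    have h2 : qNat (j + 1) ≠ 0 := qNat_ne_zero (by omega)
    have h3 : qFac d ≠ 0 := qFac_ne_zero d
    have h4 : qFac j ≠ 0 := qFac_ne_zero j
    have h5 : qFac (j + d + 1) ≠ 0 := qFac_ne_zero _
    field_simp

lemma qVandermonde (a : ℕ) : ∀ c r : ℕ,
    qBinom (a + (c + r)) r =
      ∑ j ∈ Finset.range (r + 1),
        RatFunc.X ^ (j * (c + j)) * (qBinom a j * qBinom (c + r) (r - j)) := by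
  induction a with
  | zero =>
    intro c r
    rw [Finset.sum_eq_single 0]
    · simp [qBinom_zero]
    · intro j _ hj
      rw [qBinom_eq_zero (by omega)]
      ring
    · intro h; simp at h
  | succ a ih =>
    intro c r
    rcases r with _ | r
    · simp [qBinom_zero]
    have hL : a + 1 + (c + (r + 1)) = (a + (c + (r + 1))) + 1 := by omega
    rw [hL, qBinom_pascal, show a + (c + (r + 1)) - r = a + c + 1 by omega]
    rw [ih c (r + 1)]
    have h2 : qBinom (a + (c + (r + 1))) r =
        ∑ k ∈ Finset.range (r + 1),
          RatFunc.X ^ (k * (c + 1 + k)) * (qBinom a k * qBinom (c + (r + 1)) (r - k)) := by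
      have := ih (c + 1) r
      rw [show a + (c + 1 + r) = a + (c + (r + 1)) by omega,
        show c + 1 + r = c + (r + 1) by omega] at this
      exact this
    rw [h2]
    rw [Finset.sum_range_succ' (fun j => RatFunc.X ^ (j * (c + j)) * (qBinom (a + 1) j * qBinom (c + (r + 1)) (r + 1 - j))) (r + 1)]
    rw [Finset.sum_range_succ' (fun j => RatFunc.X ^ (j * (c + j)) * (qBinom a j * qBinom (c + (r + 1)) (r + 1 - j))) (r + 1)]
    simp only [qBinom_zero, Nat.sub_zero, pow_zero, mul_one, one_mul, Nat.zero_mul]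
    rw [Finset.mul_sum, add_right_comm]
    congr 1
    rw [← Finset.sum_add_distrib]
    apply Finset.sum_congr rfl
    intro i hi
    rw [qBinom_pascal a i, show r + 1 - (i + 1) = r - i by omega]
    rcases le_or_gt i a with hia | hia
    · obtain ⟨d, rfl⟩ := Nat.exists_eq_add_of_le hia
      rw [show i + d - i = d by omega]
      have hx : (RatFunc.X : RatFunc ℚ) ^ (i + d + c + 1) * RatFunc.X ^ (i * (c + 1 + i)) =
          RatFunc.X ^ ((i + 1) * (c + (i + 1))) * RatFunc.X ^ d := by
        rw [← pow_add, ← pow_add]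
        congr 1
        ring_nf
      linear_combination (-(qBinom (i + d) i * qBinom (c + (r + 1)) (r - i))) * hx
    · rw [qBinom_eq_zero (show a < i + 1 by omega), qBinom_eq_zero hia]
      ring

lemma qStar (n p : ℕ) :
    qBinom (2 * (n + p)) p =
      ∑ j ∈ Finset.range (p + 1), ∑ k ∈ Finset.range (p - j + 1),
        RatFunc.X ^ (j * (n + j) + k * (n + k)) *
          (qBinom (n + p) j * (qBinom j k * qBinom (n + p - j) (p - j - k))) := by
  rw [two_mul]
  rw [qVandermonde (n + p) n p]
  apply Finset.sum_congr rfl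
  intro j hj
  have hjp : j ≤ p := by simpa [Nat.lt_succ_iff] using hj
  have hinner : qBinom (n + p) (p - j) =
      ∑ k ∈ Finset.range (p - j + 1),
        RatFunc.X ^ (k * (n + k)) * (qBinom j k * qBinom (n + p - j) (p - j - k)) := by
    have := qVandermonde j n (p - j)
    rw [show j + (n + (p - j)) = n + p by omega, show n + (p - j) = n + p - j by omega] at this
    exact this
  rw [hinner, Finset.mul_sum]
  rw [Finset.mul_sum]
  apply Finset.sum_congr rfl
  intro k hk
  rw [pow_add]
  ring

lemma qSwap (p : ℕ) (f : ℕ → ℕ → RatFunc ℚ) (hf : ∀ j k, j < k → f j k = 0) :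
    ∑ j ∈ Finset.range (p + 1), ∑ k ∈ Finset.range (p - j + 1), f j k =
      ∑ k ∈ Finset.range (p / 2 + 1), ∑ j ∈ Finset.Icc k (p - k), f j k := by
  have h1 : ∀ j, ∑ k ∈ Finset.range (p - j + 1), f j k =
      ∑ k ∈ (Finset.range (p - j + 1)).filter (· ≤ j), f j k := by
    intro j
    rw [Finset.sum_filter_of_ne]
    intro k _ hk
    by_contra hc
    exact hk (hf j k (by omega))
  simp only [h1]
  apply Finset.sum_comm'
  intro j k
  simp only [Finset.mem_range, Finset.mem_filter, Finset.mem_Icc, Nat.lt_succ_iff]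
  omega

set_option maxHeartbeats 2000000 in
lemma qTerm (n p k j : ℕ) (hk : k ≤ p / 2) (hjk : k ≤ j) (hjp : j ≤ p - k) :
    (qFac n * qFac (2 * n + p) / (qFac (2 * n) * qFac (n + p))) *
      (RatFunc.X ^ (j * (n + j) + k * (n + k)) *
        (qBinom (n + p) j * (qBinom j k * qBinom (n + p - j) (p - j - k)))) =
    qB (n + k) n *
      (RatFunc.X ^ (k * (n + k) + j * (n + j)) *
        qBinom (2 * n + p) (2 * n + 2 * k) * qBinom (p - 2 * k) (j - k)) := by
  have h2k : 2 * k ≤ p := by omega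
  have hjkp : j + k ≤ p := by omega
  rw [qB, qBinom_of_le (show 2 * n + 2 * k ≤ 2 * n + p by omega),
    qBinom_of_le (show j - k ≤ p - 2 * k by omega),
    qBinom_of_le (show j ≤ n + p by omega),
    qBinom_of_le hjk,
    qBinom_of_le (show p - j - k ≤ n + p - j by omega)]
  rw [show n + k - n = k by omega, show 2 * n + p - (2 * n + 2 * k) = p - 2 * k by omega,
    show p - 2 * k - (j - k) = p - j - k by omega,
    show n + p - j - (p - j - k) = n + k by omega,
    show 2 * (n + k) = 2 * n + 2 * k by ring,
    show k * (n + k) + j * (n + j) = j * (n + j) + k * (n + k) by ring]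
  have n1 := qFac_ne_zero n
  have n2 := qFac_ne_zero (2 * n + p)
  have n3 := qFac_ne_zero (2 * n)
  have n4 := qFac_ne_zero (n + p)
  have n5 := qFac_ne_zero (n + p - j)
  have n6 := qFac_ne_zero j
  have n7 := qFac_ne_zero (j - k)
  have n8 := qFac_ne_zero k
  have n9 := qFac_ne_zero (n + k)
  have n10 := qFac_ne_zero (p - j - k)
  have n11 := qFac_ne_zero (p - 2 * k)
  have n12 := qFac_ne_zero (2 * n + 2 * k)
  simp only [div_mul_eq_mul_div, mul_div_assoc', div_div]
  rw [div_eq_div_iff (by exact mul_ne_zero (mul_ne_zero n3 n4) (mul_ne_zero (mul_ne_zero n5 n6) (mul_ne_zero (mul_ne_zero n7 n8) (mul_ne_zero n9 n10))))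
    (by exact mul_ne_zero (mul_ne_zero (mul_ne_zero n9 n3) n8) (mul_ne_zero (mul_ne_zero n11 n12) (mul_ne_zero n10 n7)))]
  ring

theorem qB_recurrence (n p : ℕ) :
    qB (n + p) n =
      ∑ k ∈ Finset.range (p / 2 + 1), qB (n + k) n *
        ∑ j ∈ Finset.Icc k (p - k),
          RatFunc.X ^ (k * (n + k) + j * (n + j)) *
            qBinom (2 * n + p) (2 * n + 2 * k) * qBinom (p - 2 * k) (j - k) := by
  set c : RatFunc ℚ := qFac n * qFac (2 * n + p) / (qFac (2 * n) * qFac (n + p)) with hc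
  have claim1 : qB (n + p) n = c * qBinom (2 * (n + p)) p := by
    rw [qB, qBinom_of_le (show p ≤ 2 * (n + p) by omega), hc,
      show n + p - n = p by omega, show 2 * (n + p) - p = 2 * n + p by omega]
    have n1 := qFac_ne_zero n
    have n2 := qFac_ne_zero (2 * n + p)
    have n3 := qFac_ne_zero (2 * n)
    have n4 := qFac_ne_zero (n + p)
    have n5 := qFac_ne_zero p
    field_simp
  rw [claim1, qStar, Finset.mul_sum]
  simp only [Finset.mul_sum]
  rw [qSwap p (fun j k => c * (RatFunc.X ^ (j * (n + j) + k * (n + k)) *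
      (qBinom (n + p) j * (qBinom j k * qBinom (n + p - j) (p - j - k)))))
    (by intro j k h; simp [qBinom_eq_zero h])]
  apply Finset.sum_congr rfl
  intro k hk
  apply Finset.sum_congr rfl
  intro j hj
  have hk' : k ≤ p / 2 := by simpa [Nat.lt_succ_iff] using hk
  rw [Finset.mem_Icc] at hj
  exact qTerm n p k j hk' hj.1 hj.2
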